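/- Let G be a Z2-graded Lie algebra over a field k (G = G0 ⊕ G1 as vector spaces, [G0,G0] ⊆ G0, [G0,G1] ⊆ G1, [G1,G1] ⊆ G0), and let G₋ be a Lie subalgebra of G with G = G0 ⊕ G₋ as vector spaces, with π₊ : G → G0 the projection onto G0 along G₋. Define X*Y = [π₊(X), Y] on G1, and let [X,Y,Z] = As(X,Y,Z) − As(Y,X,Z) where As(X,Y,Z) = (X*Y)*Z − X*(Y*Z). Then for all X, Y, Z ∈ G1 one has [X,Y,Z] = [[X,Y],Z], where the right-hand side is computed with the Lie bracket of G. -/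
import Mathlib


/-- In the setting of a Z2-graded Lie algebra `G = G0 ⊕ G1` with a Lie
subalgebra complement `G₋` of `G0` and `X*Y = [π₊(X),Y]` on `G1`, the ternary
operation `[X,Y,Z] = As(X,Y,Z) − As(Y,X,Z)` satisfies `[X,Y,Z] = [[X,Y],Z]`
(right-hand side computed with the Lie bracket of `G`) for `X, Y, Z ∈ G1`. -/
theorem stmt_2 {k G : Type*} [Field k] [LieRing G] [LieAlgebra k G]
    (G0 G1 Gm : Submodule k G)
    (hG01 : IsCompl G0 G1)
    (h00 : ∀ x ∈ G0, ∀ y ∈ G0, ⁅x, y⁆ ∈ G0)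
    (h01 : ∀ x ∈ G0, ∀ y ∈ G1, ⁅x, y⁆ ∈ G1)
    (h11 : ∀ x ∈ G1, ∀ y ∈ G1, ⁅x, y⁆ ∈ G0)
    (hGmsub : ∀ x ∈ Gm, ∀ y ∈ Gm, ⁅x, y⁆ ∈ Gm)
    (hG0m : IsCompl G0 Gm)
    (π : G →ₗ[k] G)
    (hπ0 : ∀ x, π x ∈ G0)
    (hπm : ∀ x, x - π x ∈ Gm)
    (mul : G → G → G)
    (hmul : ∀ X Y, mul X Y = ⁅π X, Y⁆)
    (As : G → G → G → G)
    (hAs : ∀ X Y Z, As X Y Z = mul (mul X Y) Z - mul X (mul Y Z))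
    (tri : G → G → G → G)
    (htri : ∀ X Y Z, tri X Y Z = As X Y Z - As Y X Z) :
    ∀ X ∈ G1, ∀ Y ∈ G1, ∀ Z ∈ G1, tri X Y Z = ⁅⁅X, Y⁆, Z⁆ := by
  intro X hX Y hY Z hZ
  -- π fixes G0
  have pG0 : ∀ x ∈ G0, π x = x := by
    intro x hx
    have h1 : x - π x ∈ G0 := G0.sub_mem hx (hπ0 x)
    have h2 : x - π x ∈ G0 ⊓ Gm := ⟨h1, hπm x⟩
    rw [hG0m.inf_eq_bot, Submodule.mem_bot] at h2
    have := sub_eq_zero.mp h2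
    exact this.symm
  -- π kills Gm
  have pGm : ∀ x ∈ Gm, π x = 0 := by
    intro x hx
    have h1 : π x ∈ Gm := by
      have : π x = x - (x - π x) := by abel
      rw [this]
      exact Gm.sub_mem hx (hπm x)
    have h2 : π x ∈ G0 ⊓ Gm := ⟨hπ0 x, h1⟩
    rw [hG0m.inf_eq_bot, Submodule.mem_bot] at h2
    exact h2
  -- key identity
  have hmm : ⁅X - π X, Y - π Y⁆ ∈ Gm := hGmsub _ (hπm X) _ (hπm Y)
  have e : ⁅π X, Y⁆ - ⁅π Y, X⁆ = (⁅X, Y⁆ + ⁅π X, π Y⁆) - ⁅X - π X, Y - π Y⁆ := by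
    simp only [lie_sub, sub_lie]
    rw [← lie_skew (π Y) X]
    abel
  have key : ⁅X, Y⁆ = π ⁅π X, Y⁆ - π ⁅π Y, X⁆ - ⁅π X, π Y⁆ := by
    have h := congrArg π e
    rw [map_sub, map_sub, map_add, pG0 _ (h11 X hX Y hY),
      pG0 _ (h00 _ (hπ0 X) _ (hπ0 Y)), pGm _ hmm, sub_zero] at h
    rw [h]
    abel
  simp only [htri, hAs, hmul]
  rw [key]
  simp only [sub_lie, lie_lie]
  abel
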